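/- Let A ∈ ℝ^{n×n} be Metzler, let λ ∈ ℝ^n, and let v ∈ ℝ^n with v ≥ 0 satisfy Aλ + v < 0 (entrywise). Then for every τ ≥ 0, e^{Aτ}λ + ∫₀^{τ} e^{As} v ds ≤ λ entrywise, and the inequality is strict in every component whenever τ > 0. -/

import Mathlib

open Matrix

/-- A square real matrix is Metzler if all its off-diagonal entries are nonnegative. -/
def Metzler {n : ℕ} (A : Matrix (Fin n) (Fin n) ℝ) : Prop :=
  ∀ i j, i ≠ j → 0 ≤ A i j

section Aux

attribute [local instance] Matrix.linftyOpSemiNormedRing Matrix.linftyOpNormedRing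
  Matrix.linftyOpNormedAlgebra

lemma pow_entry_nonneg {n : ℕ} {X : Matrix (Fin n) (Fin n) ℝ}
    (hX : ∀ i j, 0 ≤ X i j) : ∀ (k : ℕ) (i j), 0 ≤ (X ^ k) i j := by
  intro k
  induction k with
  | zero =>
    intro i j
    rw [pow_zero, Matrix.one_apply]
    split <;> norm_num
  | succ k ih =>
    intro i j
    rw [pow_succ, Matrix.mul_apply]
    exact Finset.sum_nonneg fun l _ => mul_nonneg (ih i l) (hX l j)

lemma exp_nonneg_entries {n : ℕ} {X : Matrix (Fin n) (Fin n) ℝ}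
    (hX : ∀ i j, 0 ≤ X i j) :
    (∀ i j, 0 ≤ NormedSpace.exp X i j) ∧ ∀ i, 1 ≤ NormedSpace.exp X i i := by
  have hsum : Summable (fun k : ℕ => ((k.factorial : ℝ))⁻¹ • X ^ k) :=
    NormedSpace.expSeries_summable' X
  have hsum2 : ∀ i, Summable (fun k : ℕ => (((k.factorial : ℝ))⁻¹ • X ^ k) i) :=
    fun i => Pi.summable.mp hsum i
  have hsum3 : ∀ i j, Summable (fun k : ℕ => (((k.factorial : ℝ))⁻¹ • X ^ k) i j) :=
    fun i j => Pi.summable.mp (hsum2 i) j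
  have hentry : ∀ i j, NormedSpace.exp X i j
      = ∑' k : ℕ, (((k.factorial : ℝ))⁻¹ • X ^ k) i j := by
    intro i j
    rw [NormedSpace.exp_eq_tsum (𝕂 := ℝ)]
    show (∑' k : ℕ, ((k.factorial : ℝ))⁻¹ • X ^ k) i j = _
    erw [tsum_apply hsum, tsum_apply (hsum2 i)]
  have hterm : ∀ (k : ℕ) (i j), 0 ≤ (((k.factorial : ℝ))⁻¹ • X ^ k) i j := by
    intro k i j
    have h : (((k.factorial : ℝ))⁻¹ • X ^ k) i j
        = ((k.factorial : ℝ))⁻¹ * (X ^ k) i j := rfl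
    rw [h]
    exact mul_nonneg (by positivity) (pow_entry_nonneg hX k i j)
  constructor
  · intro i j
    rw [hentry i j]
    exact tsum_nonneg fun k => hterm k i j
  · intro i
    rw [hentry i i]
    have h0 : (((Nat.factorial 0 : ℕ) : ℝ))⁻¹ • (X ^ 0) i i
        ≤ ∑' k : ℕ, (((k.factorial : ℝ))⁻¹ • X ^ k) i i :=
      Summable.le_tsum (hsum3 i i) 0 (fun k _ => hterm k i i)
    simpa [Matrix.one_apply] using h0

lemma metzler_exp_entries {n : ℕ} {M : Matrix (Fin n) (Fin n) ℝ} (hM : Metzler M) :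
    (∀ i j, 0 ≤ NormedSpace.exp M i j) ∧ ∀ i, 0 < NormedSpace.exp M i i := by
  set c : ℝ := ∑ i, |M i i| with hc
  have hc0 : ∀ i, 0 ≤ M i i + c := by
    intro i
    have h1 : |M i i| ≤ c :=
      Finset.single_le_sum (f := fun i => |M i i|) (fun j _ => abs_nonneg _) (Finset.mem_univ i)
    have h2 := neg_abs_le (M i i)
    linarith
  set B : Matrix (Fin n) (Fin n) ℝ := M + c • 1 with hB
  have hBnn : ∀ i j, 0 ≤ B i j := by
    intro i j
    by_cases h : i = j
    · subst h
      simpa [hB, Matrix.one_apply] using hc0 i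
    · simpa [hB, Matrix.one_apply, h] using hM i j h
  have hMeq : M = B + (-c) • (1 : Matrix (Fin n) (Fin n) ℝ) := by
    rw [hB]
    rw [neg_smul]
    abel
  have hcomm : Commute B ((-c) • (1 : Matrix (Fin n) (Fin n) ℝ)) :=
    (Commute.one_right B).smul_right _
  have hscal : NormedSpace.exp ((-c) • (1 : Matrix (Fin n) (Fin n) ℝ))
      = Real.exp (-c) • (1 : Matrix (Fin n) (Fin n) ℝ) := by
    have h1 : (-c) • (1 : Matrix (Fin n) (Fin n) ℝ)
        = algebraMap ℝ (Matrix (Fin n) (Fin n) ℝ) (-c) := by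
      rw [Algebra.algebraMap_eq_smul_one]
    rw [h1]; erw [← NormedSpace.algebraMap_exp_comm (𝕂 := ℝ) (𝔸 := Matrix (Fin n) (Fin n) ℝ), Algebra.algebraMap_eq_smul_one,
      ← Real.exp_eq_exp_ℝ]
  have hexp : NormedSpace.exp M
      = Real.exp (-c) • NormedSpace.exp B := by
    rw [hMeq, Matrix.exp_add_of_commute B _ hcomm, hscal, Matrix.mul_smul, Matrix.mul_one]
  obtain ⟨hnn, hdiag⟩ := exp_nonneg_entries hBnn
  have hpos : 0 < Real.exp (-c) := Real.exp_pos _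
  constructor
  · intro i j
    rw [hexp]
    have : (Real.exp (-c) • NormedSpace.exp B) i j
        = Real.exp (-c) * NormedSpace.exp B i j := rfl
    rw [this]
    exact mul_nonneg hpos.le (hnn i j)
  · intro i
    rw [hexp]
    have h : (Real.exp (-c) • NormedSpace.exp B) i i
        = Real.exp (-c) * NormedSpace.exp B i i := rfl
    rw [h]
    exact mul_pos hpos (lt_of_lt_of_le one_pos (hdiag i))

lemma metzler_smul {n : ℕ} {A : Matrix (Fin n) (Fin n) ℝ} (hA : Metzler A)
    {τ : ℝ} (hτ : 0 ≤ τ) : Metzler (τ • A) := by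
  intro i j hij
  have : (τ • A) i j = τ * A i j := rfl
  rw [this]
  exact mul_nonneg hτ (hA i j hij)

lemma metzler_exp_mulVec_neg {n : ℕ} {M : Matrix (Fin n) (Fin n) ℝ} (hM : Metzler M)
    {w : Fin n → ℝ} (hw : ∀ i, w i < 0) (i : Fin n) :
    (NormedSpace.exp M *ᵥ w) i < 0 := by
  obtain ⟨hnn, hpos⟩ := metzler_exp_entries hM
  have hv : (NormedSpace.exp M *ᵥ w) i = ∑ j, NormedSpace.exp M i j * w j := by
    simp [Matrix.mulVec, dotProduct]
  rw [hv, ← Finset.add_sum_erase _ _ (Finset.mem_univ i)]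
  have h1 : NormedSpace.exp M i i * w i < 0 := mul_neg_of_pos_of_neg (hpos i) (hw i)
  have h2 : ∑ j ∈ Finset.univ.erase i, NormedSpace.exp M i j * w j ≤ 0 :=
    Finset.sum_nonpos fun j _ => mul_nonpos_of_nonneg_of_nonpos (hnn i j) (hw j).le
  linarith

/-- If `A` is Metzler, `v ≥ 0` and `Aλ + v < 0` entrywise, then
`e^{Aτ}λ + ∫₀^τ e^{As}v ds ≤ λ` entrywise for every `τ ≥ 0`, strictly whenever `τ > 0`. -/
theorem metzler_exp_integral_le {n : ℕ}
    (A : Matrix (Fin n) (Fin n) ℝ) (hA : Metzler A)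
    (lam v : Fin n → ℝ) (hv : ∀ i, 0 ≤ v i)
    (hlam : ∀ i, (A *ᵥ lam + v) i < 0) :
    ∀ τ : ℝ, 0 ≤ τ →
      (∀ i, (NormedSpace.exp (τ • A) *ᵥ lam
        + ∫ s in (0:ℝ)..τ, NormedSpace.exp (s • A) *ᵥ v) i ≤ lam i) ∧
      (0 < τ → ∀ i, (NormedSpace.exp (τ • A) *ᵥ lam
        + ∫ s in (0:ℝ)..τ, NormedSpace.exp (s • A) *ᵥ v) i < lam i) := by
  set w : Fin n → ℝ := A *ᵥ lam + v with hw
  -- continuity of the matrix exponential curve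
  have hcontM : Continuous fun s : ℝ => NormedSpace.exp (s • A) :=
    NormedSpace.exp_continuous.comp (continuous_id.smul continuous_const)
  have hcontv : Continuous fun s : ℝ => NormedSpace.exp (s • A) *ᵥ v := by
    apply continuous_pi
    intro i
    simp only [Matrix.mulVec, dotProduct]
    exact continuous_finset_sum _ fun j _ =>
      ((continuous_apply j).comp ((continuous_apply i).comp hcontM)).mul continuous_const
  -- entries of the vector integral
  have hEntry : ∀ (τ : ℝ) (i : Fin n),
      (∫ s in (0:ℝ)..τ, NormedSpace.exp (s • A) *ᵥ v) i
        = ∫ s in (0:ℝ)..τ, (NormedSpace.exp (s • A) *ᵥ v) i := by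
    intro τ i
    have h := (ContinuousLinearMap.proj (R := ℝ) (φ := fun _ : Fin n => ℝ)
        i).intervalIntegral_comp_comm (hcontv.intervalIntegrable (μ := MeasureTheory.volume) 0 τ)
    simpa using h.symm
  -- derivative of entries of the exponential
  have entryD : ∀ (i j : Fin n) (t : ℝ),
      HasDerivAt (fun u : ℝ => NormedSpace.exp (u • A) i j)
        ((NormedSpace.exp (t • A) * A) i j) t := by
    intro i j t
    have h := hasDerivAt_exp_smul_const (𝕂 := ℝ) A t
    have h2 := (LinearMap.toContinuousLinearMap
        (Matrix.entryLinearMap ℝ ℝ i j)).hasFDerivAt.comp_hasDerivAt t h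
    exact h2
  -- derivative of the first summand, entrywise
  have hg : ∀ (i : Fin n) (t : ℝ),
      HasDerivAt (fun u : ℝ => (NormedSpace.exp (u • A) *ᵥ lam) i)
        ((NormedSpace.exp (t • A) *ᵥ (A *ᵥ lam)) i) t := by
    intro i t
    have h2 : HasDerivAt (fun u : ℝ => ∑ j, NormedSpace.exp (u • A) i j * lam j)
        (∑ j, (NormedSpace.exp (t • A) * A) i j * lam j) t :=
      HasDerivAt.fun_sum fun j _ => (entryD i j t).mul_const (lam j)
    have hfun : (fun u : ℝ => (NormedSpace.exp (u • A) *ᵥ lam) i)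
        = fun u : ℝ => ∑ j, NormedSpace.exp (u • A) i j * lam j := by
      funext u
      simp [Matrix.mulVec, dotProduct]
    have hval : (NormedSpace.exp (t • A) *ᵥ (A *ᵥ lam)) i
        = ∑ j, (NormedSpace.exp (t • A) * A) i j * lam j := by
      rw [Matrix.mulVec_mulVec]
      simp [Matrix.mulVec, dotProduct]
    rw [hfun, hval]
    exact h2
  -- derivative of the integral part, entrywise
  have hInt : ∀ (i : Fin n) (t : ℝ),
      HasDerivAt (fun τ : ℝ => ∫ s in (0:ℝ)..τ, (NormedSpace.exp (s • A) *ᵥ v) i)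
        ((NormedSpace.exp (t • A) *ᵥ v) i) t := by
    intro i t
    have hci : Continuous fun s : ℝ => (NormedSpace.exp (s • A) *ᵥ v) i :=
      (continuous_apply i).comp hcontv
    exact intervalIntegral.integral_hasDerivAt_right (hci.intervalIntegrable 0 t)
      (hci.stronglyMeasurableAtFilter _ _) hci.continuousAt
  -- the component functions
  set φ : Fin n → ℝ → ℝ := fun i τ =>
    (NormedSpace.exp (τ • A) *ᵥ lam) i
      + ∫ s in (0:ℝ)..τ, (NormedSpace.exp (s • A) *ᵥ v) i with hφ
  have hDeriv : ∀ (i : Fin n) (t : ℝ),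
      HasDerivAt (φ i) ((NormedSpace.exp (t • A) *ᵥ w) i) t := by
    intro i t
    have h := (hg i t).add (hInt i t)
    have hval : (NormedSpace.exp (t • A) *ᵥ w) i
        = (NormedSpace.exp (t • A) *ᵥ (A *ᵥ lam)) i
          + (NormedSpace.exp (t • A) *ᵥ v) i := by
      rw [hw, Matrix.mulVec_add]
      rfl
    rw [hval]
    exact h
  have hDerivNeg : ∀ (i : Fin n) (t : ℝ), 0 ≤ t →
      (NormedSpace.exp (t • A) *ᵥ w) i < 0 := by
    intro i t ht
    exact metzler_exp_mulVec_neg (metzler_smul hA ht) hlam i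
  have hanti : ∀ i : Fin n, StrictAntiOn (φ i) (Set.Ici (0:ℝ)) := by
    intro i
    apply strictAntiOn_of_deriv_neg (convex_Ici 0)
    · exact Continuous.continuousOn (by
        have : ∀ t : ℝ, HasDerivAt (φ i) ((NormedSpace.exp (t • A) *ᵥ w) i) t := hDeriv i
        exact continuous_iff_continuousAt.mpr fun t => (this t).continuousAt)
    · intro x hx
      rw [interior_Ici] at hx
      rw [(hDeriv i x).deriv]
      exact hDerivNeg i x (le_of_lt hx)
  have hzero : ∀ i : Fin n, φ i 0 = lam i := by
    intro i
    rw [hφ]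
    simp only [zero_smul, NormedSpace.exp_zero, intervalIntegral.integral_same, add_zero,
      Matrix.one_mulVec]
  have hgoal : ∀ (τ : ℝ) (i : Fin n),
      (NormedSpace.exp (τ • A) *ᵥ lam
        + ∫ s in (0:ℝ)..τ, NormedSpace.exp (s • A) *ᵥ v) i = φ i τ := by
    intro τ i
    rw [hφ]
    simp only [Pi.add_apply]
    rw [hEntry τ i]
  intro τ hτ
  constructor
  · intro i
    rw [hgoal τ i]
    rcases eq_or_lt_of_le hτ with h | h
    · rw [← h, hzero i]
    · rw [← hzero i]
      exact le_of_lt (hanti i (Set.self_mem_Ici) (Set.mem_Ici.mpr hτ) h)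
  · intro hτpos i
    rw [hgoal τ i, ← hzero i]
    exact hanti i (Set.self_mem_Ici) (Set.mem_Ici.mpr hτ) hτpos

end Aux
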